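/- Let n, m ∈ ℝ^N with max_i |n_i| ≤ √A and max_i |m_i| ≤ √A, and let S, T be N×K real matrices such that ‖S⁰ y‖² ≤ BN and ‖T⁰ y‖² ≤ BN for all y ∈ {−2,0,2}^K (where S⁰, T⁰ are obtained by multiplying column k by x_k⁰ ∈ {±1}). Then for all x ∈ {−1,1}^K, |‖N^{−1/2} S⁰(x−1) − σn‖² − ‖N^{−1/2} T⁰(x−1) − σm‖²| ≤ 2(2√β + σ)(σ√(NA) + √B) · ‖(n,S) − (m,T)‖, where β = K/N and ‖(n,S)−(m,T)‖ is the Euclidean norm on ℝ^N × ℝ^{NK}. -/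

import Mathlib

open Real RealInnerProductSpace Finset

lemma euclid_norm' {N : ℕ} (f : EuclideanSpace ℝ (Fin N)) :
    ‖f‖ = Real.sqrt (∑ i, (f i)^2) := by
  rw [EuclideanSpace.norm_eq]; simp [sq_abs]

lemma euclid_sq' {N : ℕ} (f : EuclideanSpace ℝ (Fin N)) :
    ∑ i, (f i)^2 = ‖f‖^2 := by
  rw [euclid_norm', Real.sq_sqrt (by positivity)]

lemma euclid_norm_le' {N : ℕ} (f : EuclideanSpace ℝ (Fin N)) (c : ℝ) (hc : 0 ≤ c)
    (h : ∑ i, (f i)^2 ≤ c^2) : ‖f‖ ≤ c := by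
  rw [euclid_norm']
  calc Real.sqrt (∑ i, (f i)^2) ≤ Real.sqrt (c^2) := Real.sqrt_le_sqrt h
  _ = c := Real.sqrt_sq hc

lemma euclid_sq_diff' {N : ℕ} (f g : EuclideanSpace ℝ (Fin N)) :
    |‖f‖^2 - ‖g‖^2| ≤ ‖f - g‖ * ‖f + g‖ := by
  have h : ⟪f - g, f + g⟫ = ‖f‖^2 - ‖g‖^2 := by
    rw [inner_sub_left, inner_add_right, inner_add_right,
      real_inner_self_eq_norm_sq, real_inner_self_eq_norm_sq, real_inner_comm g f]
    ring
  rw [← h]; exact abs_real_inner_le_norm _ _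

/-- Lipschitz estimate for the CDMA Hamiltonian: under bounds `max|n_i|, max|m_i| ≤ √A` and
`‖S⁰y‖², ‖T⁰y‖² ≤ BN` for all `y ∈ {−2,0,2}^K`, the difference of the squared norms
`‖N^{−1/2}S⁰(x−1) − σn‖²` and `‖N^{−1/2}T⁰(x−1) − σm‖²` is bounded by
`2(2√β + σ)(σ√(NA) + √B)‖(n,S) − (m,T)‖`, with `β = K/N`. -/
theorem hamiltonian_lipschitz_bound
    (N K : ℕ) (hN : 0 < N) (hK : 0 < K)
    (σ A B : ℝ) (hσ : 0 < σ) (hA : 0 < A) (hB : 0 < B)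
    (n m : Fin N → ℝ) (S T : Fin N → Fin K → ℝ) (x0 : Fin K → ℝ)
    (hx0 : ∀ k, x0 k = 1 ∨ x0 k = -1)
    (hn : ∀ i, |n i| ≤ Real.sqrt A) (hm : ∀ i, |m i| ≤ Real.sqrt A)
    (hS : ∀ y : Fin K → ℝ, (∀ k, y k = -2 ∨ y k = 0 ∨ y k = 2) →
      ∑ i, (∑ k, S i k * x0 k * y k) ^ 2 ≤ B * N)
    (hT : ∀ y : Fin K → ℝ, (∀ k, y k = -2 ∨ y k = 0 ∨ y k = 2) →
      ∑ i, (∑ k, T i k * x0 k * y k) ^ 2 ≤ B * N) :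
    ∀ x : Fin K → ℝ, (∀ k, x k = 1 ∨ x k = -1) →
      |(∑ i, ((1 / Real.sqrt N) * (∑ k, S i k * x0 k * (x k - 1)) - σ * n i) ^ 2)
          - ∑ i, ((1 / Real.sqrt N) * (∑ k, T i k * x0 k * (x k - 1)) - σ * m i) ^ 2|
        ≤ 2 * (2 * Real.sqrt ((K : ℝ) / N) + σ) * (σ * Real.sqrt (N * A) + Real.sqrt B)
          * Real.sqrt ((∑ i, (n i - m i) ^ 2) + ∑ i, ∑ k, (S i k - T i k) ^ 2) := by
  intro x hx
  have hN0 : (0:ℝ) < N := by exact_mod_cast hN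
  have hNs : Real.sqrt N ≠ 0 := by positivity
  set D : ℝ := Real.sqrt ((∑ i, (n i - m i) ^ 2) + ∑ i, ∑ k, (S i k - T i k) ^ 2) with hDdef
  have hDnn : 0 ≤ D := Real.sqrt_nonneg _
  have hD2 : D^2 = (∑ i, (n i - m i) ^ 2) + ∑ i, ∑ k, (S i k - T i k) ^ 2 :=
    Real.sq_sqrt (by positivity)
  -- bounds on squares of entries
  have hxk : ∀ k, (x k - 1)^2 ≤ 4 := by
    intro k; rcases hx k with h | h <;> rw [h] <;> norm_num
  have hx0k : ∀ k, (x0 k)^2 = 1 := by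
    intro k; rcases hx0 k with h | h <;> rw [h] <;> norm_num
  have hy : ∀ k, x k - 1 = -2 ∨ x k - 1 = 0 ∨ x k - 1 = 2 := by
    intro k; rcases hx k with h | h
    · right; left; rw [h]; ring
    · left; rw [h]; ring
  -- the vectors
  let u : EuclideanSpace ℝ (Fin N) := WithLp.toLp 2 <| fun i =>
    (1 / Real.sqrt N) * (∑ k, S i k * x0 k * (x k - 1)) - σ * n i
  let v : EuclideanSpace ℝ (Fin N) := WithLp.toLp 2 <| fun i =>
    (1 / Real.sqrt N) * (∑ k, T i k * x0 k * (x k - 1)) - σ * m i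
  let p : EuclideanSpace ℝ (Fin N) := WithLp.toLp 2 <| fun i =>
    (1 / Real.sqrt N) * (∑ k, S i k * x0 k * (x k - 1))
  let q : EuclideanSpace ℝ (Fin N) := WithLp.toLp 2 <| fun i =>
    (1 / Real.sqrt N) * (∑ k, T i k * x0 k * (x k - 1))
  let w : EuclideanSpace ℝ (Fin N) := WithLp.toLp 2 <| fun i => -(σ * (n i + m i))
  let a : EuclideanSpace ℝ (Fin N) := WithLp.toLp 2 <| fun i =>
    (1 / Real.sqrt N) * (∑ k, (S i k - T i k) * (x0 k * (x k - 1)))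
  let b : EuclideanSpace ℝ (Fin N) := WithLp.toLp 2 <| fun i => -(σ * (n i - m i))
  have hNinv : (1 / Real.sqrt N)^2 = 1 / N := by
    rw [div_pow, one_pow, Real.sq_sqrt (le_of_lt hN0)]
  -- bound ‖p‖ ≤ √B
  have hp : ‖p‖ ≤ Real.sqrt B := by
    apply euclid_norm_le' _ _ (Real.sqrt_nonneg _)
    rw [Real.sq_sqrt hB.le]
    have h1 : ∑ i, (p i)^2 = (1/N) * ∑ i, (∑ k, S i k * x0 k * (x k - 1))^2 := by
      rw [Finset.mul_sum]
      exact Finset.sum_congr rfl fun i _ => by simp only [p, q, a, PiLp.toLp_apply]; rw [mul_pow, hNinv]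
    rw [h1]
    have := hS (fun k => x k - 1) hy
    rw [div_mul_eq_mul_div, one_mul, div_le_iff₀ hN0]
    calc ∑ i, (∑ k, S i k * x0 k * (x k - 1))^2 ≤ B * N := this
      _ = B * N := rfl
  have hq : ‖q‖ ≤ Real.sqrt B := by
    apply euclid_norm_le' _ _ (Real.sqrt_nonneg _)
    rw [Real.sq_sqrt hB.le]
    have h1 : ∑ i, (q i)^2 = (1/N) * ∑ i, (∑ k, T i k * x0 k * (x k - 1))^2 := by
      rw [Finset.mul_sum]
      exact Finset.sum_congr rfl fun i _ => by simp only [p, q, a, PiLp.toLp_apply]; rw [mul_pow, hNinv]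
    rw [h1, div_mul_eq_mul_div, one_mul, div_le_iff₀ hN0]
    exact hT (fun k => x k - 1) hy
  -- bound ‖w‖ ≤ 2σ√(NA)
  have hw : ‖w‖ ≤ 2 * σ * Real.sqrt (N * A) := by
    apply euclid_norm_le' _ _ (by positivity)
    have hc : (2 * σ * Real.sqrt (N * A))^2 = 4 * σ^2 * (N * A) := by
      rw [mul_pow, mul_pow, Real.sq_sqrt (by positivity)]; ring
    rw [hc]
    have hterm : ∀ i : Fin N, (w i)^2 ≤ σ^2 * (4 * A) := by
      intro i
      have h1 : (n i + m i)^2 ≤ 4 * A := by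
        have h2 : |n i + m i| ≤ 2 * Real.sqrt A :=
          (abs_add_le _ _).trans (by linarith [hn i, hm i])
        calc (n i + m i)^2 = |n i + m i|^2 := (sq_abs _).symm
          _ ≤ (2 * Real.sqrt A)^2 := by
              apply pow_le_pow_left₀ (abs_nonneg _) h2
          _ = 4 * A := by rw [mul_pow, Real.sq_sqrt hA.le]; norm_num
      calc (w i)^2 = σ^2 * (n i + m i)^2 := by simp [w]; ring
        _ ≤ σ^2 * (4 * A) := by nlinarith [sq_nonneg σ]
    calc ∑ i, (w i)^2 ≤ ∑ _i : Fin N, σ^2 * (4 * A) := Finset.sum_le_sum fun i _ => hterm i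
      _ = N * (σ^2 * (4 * A)) := by rw [Finset.sum_const, Finset.card_fin, nsmul_eq_mul]
      _ = 4 * σ^2 * (N * A) := by ring
  -- bound ‖a‖ ≤ 2√(K/N) D
  have ha : ‖a‖ ≤ 2 * Real.sqrt ((K:ℝ)/N) * D := by
    apply euclid_norm_le' _ _ (by positivity)
    have hc : (2 * Real.sqrt ((K:ℝ)/N) * D)^2 = 4 * ((K:ℝ)/N) * D^2 := by
      rw [mul_pow, mul_pow, Real.sq_sqrt (by positivity)]; ring
    rw [hc]
    have hrow : ∀ i : Fin N, (∑ k, (S i k - T i k) * (x0 k * (x k - 1)))^2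
        ≤ (∑ k, (S i k - T i k)^2) * (4 * K) := by
      intro i
      calc (∑ k, (S i k - T i k) * (x0 k * (x k - 1)))^2
          ≤ (∑ k, (S i k - T i k)^2) * (∑ k, (x0 k * (x k - 1))^2) :=
            Finset.sum_mul_sq_le_sq_mul_sq _ _ _
        _ ≤ (∑ k, (S i k - T i k)^2) * (4 * K) := by
            apply mul_le_mul_of_nonneg_left _ (by positivity)
            calc ∑ k, (x0 k * (x k - 1))^2 = ∑ k, (x k - 1)^2 := by
                  refine Finset.sum_congr rfl fun k _ => ?_
                  rw [mul_pow, hx0k k, one_mul]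
              _ ≤ ∑ _k : Fin K, (4:ℝ) := Finset.sum_le_sum fun k _ => hxk k
              _ = 4 * K := by rw [Finset.sum_const, Finset.card_fin, nsmul_eq_mul]; ring
    have hsum : ∑ i, (a i)^2 ≤ (1/N) * ((∑ i, ∑ k, (S i k - T i k)^2) * (4 * K)) := by
      have : ∑ i, (a i)^2 = (1/N) * ∑ i, (∑ k, (S i k - T i k) * (x0 k * (x k - 1)))^2 := by
        rw [Finset.mul_sum]
        exact Finset.sum_congr rfl fun i _ => by simp only [p, q, a, PiLp.toLp_apply]; rw [mul_pow, hNinv]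
      rw [this]
      apply mul_le_mul_of_nonneg_left _ (by positivity)
      rw [Finset.sum_mul]
      exact Finset.sum_le_sum fun i _ => hrow i
    refine hsum.trans ?_
    have hST : (∑ i, ∑ k, (S i k - T i k)^2) ≤ D^2 := by
      rw [hD2]; have : (0:ℝ) ≤ ∑ i, (n i - m i)^2 := by positivity
      linarith
    calc (1/N) * ((∑ i, ∑ k, (S i k - T i k)^2) * (4 * K))
        ≤ (1/N) * (D^2 * (4 * K)) := by
          apply mul_le_mul_of_nonneg_left _ (by positivity)
          apply mul_le_mul_of_nonneg_right hST (by positivity)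
      _ = 4 * ((K:ℝ)/N) * D^2 := by field_simp
  -- bound ‖b‖ ≤ σ D
  have hb : ‖b‖ ≤ σ * D := by
    apply euclid_norm_le' _ _ (by positivity)
    have hnm : (∑ i, (n i - m i)^2) ≤ D^2 := by
      rw [hD2]; have : (0:ℝ) ≤ ∑ i, ∑ k, (S i k - T i k)^2 := by positivity
      linarith
    calc ∑ i, (b i)^2 = σ^2 * ∑ i, (n i - m i)^2 := by
          rw [Finset.mul_sum]
          exact Finset.sum_congr rfl fun i _ => by simp [b]; ring
      _ ≤ σ^2 * D^2 := by nlinarith [sq_nonneg σ]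
      _ = (σ * D)^2 := by ring
  -- decompositions
  have huv_sub : u - v = a + b := by
    ext i
    show u i - v i = a i + b i
    simp only [u, v, a, b, Finset.mul_sum]
    have hsum : (∑ k, (1 / Real.sqrt N) * (S i k * x0 k * (x k - 1)))
        - ∑ k, (1 / Real.sqrt N) * (T i k * x0 k * (x k - 1))
        = ∑ k, (1 / Real.sqrt N) * ((S i k - T i k) * (x0 k * (x k - 1))) := by
      rw [← Finset.sum_sub_distrib]
      exact Finset.sum_congr rfl fun k _ => by ring
    linarith [hsum]
  have huv_add : u + v = p + q + w := by
    ext i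
    show u i + v i = p i + q i + w i
    simp only [u, v, p, q, w]
    ring
  have hsub : ‖u - v‖ ≤ (2 * Real.sqrt ((K:ℝ)/N) + σ) * D := by
    rw [huv_sub]
    calc ‖a + b‖ ≤ ‖a‖ + ‖b‖ := norm_add_le _ _
      _ ≤ 2 * Real.sqrt ((K:ℝ)/N) * D + σ * D := add_le_add ha hb
      _ = (2 * Real.sqrt ((K:ℝ)/N) + σ) * D := by ring
  have hadd : ‖u + v‖ ≤ 2 * (σ * Real.sqrt (N * A) + Real.sqrt B) := by
    rw [huv_add]
    calc ‖p + q + w‖ ≤ ‖p + q‖ + ‖w‖ := norm_add_le _ _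
      _ ≤ (‖p‖ + ‖q‖) + ‖w‖ := by linarith [norm_add_le p q]
      _ ≤ (Real.sqrt B + Real.sqrt B) + 2 * σ * Real.sqrt (N * A) := by
          linarith [hp, hq, hw]
      _ = 2 * (σ * Real.sqrt (N * A) + Real.sqrt B) := by ring
  -- conclude
  have hmain := euclid_sq_diff' u v
  have h1 : ∑ i, ((1 / Real.sqrt N) * (∑ k, S i k * x0 k * (x k - 1)) - σ * n i) ^ 2
      = ‖u‖^2 := euclid_sq' u
  have h2 : ∑ i, ((1 / Real.sqrt N) * (∑ k, T i k * x0 k * (x k - 1)) - σ * m i) ^ 2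
      = ‖v‖^2 := euclid_sq' v
  rw [h1, h2]
  calc |‖u‖^2 - ‖v‖^2| ≤ ‖u - v‖ * ‖u + v‖ := hmain
    _ ≤ ((2 * Real.sqrt ((K:ℝ)/N) + σ) * D) * (2 * (σ * Real.sqrt (N * A) + Real.sqrt B)) := by
        apply mul_le_mul hsub hadd (norm_nonneg _) (by positivity)
    _ = 2 * (2 * Real.sqrt ((K:ℝ)/N) + σ) * (σ * Real.sqrt (N * A) + Real.sqrt B) * D := by
        ring
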